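/- Let X be a real vector space equipped with the core convex topology τ_c, and let A ⊆ X be a convex, relatively solid set (icr(A) ≠ ∅). Then the vectorial closure of A equals the τ_c-closure of A: vcl(A) = cl_c(A). -/

import Mathlib

open Pointwise

/-- Algebraic interior (core) of a set `A` in a real vector space:
`cor A = {x ∈ A | ∀ d, ∃ δ > 0, ∀ λ ∈ [0, δ], x + λ • d ∈ A}`. -/
def cor {X : Type*} [AddCommGroup X] [Module ℝ X] (A : Set X) : Set X :=
  {x | x ∈ A ∧ ∀ d : X, ∃ δ : ℝ, 0 < δ ∧ ∀ lam ∈ Set.Icc (0 : ℝ) δ, x + lam • d ∈ A}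

/-- Relative algebraic interior of `A`: directions are taken in `L(A) = span (A - A)`. -/
def icr {X : Type*} [AddCommGroup X] [Module ℝ X] (A : Set X) : Set X :=
  {x | x ∈ A ∧ ∀ d ∈ Submodule.span ℝ (A - A),
    ∃ δ : ℝ, 0 < δ ∧ ∀ lam ∈ Set.Icc (0 : ℝ) δ, x + lam • d ∈ A}

/-- Vectorial closure of `A`:
`vcl A = {b | ∃ d, ∀ δ > 0, ∃ λ ∈ [0, δ], b + λ • d ∈ A}`. -/
def vcl {X : Type*} [AddCommGroup X] [Module ℝ X] (A : Set X) : Set X :=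
  {b | ∃ d : X, ∀ δ : ℝ, 0 < δ → ∃ lam ∈ Set.Icc (0 : ℝ) δ, b + lam • d ∈ A}

/-- The core convex topology `τ_c`: the topology whose open sets are the unions of
members of `𝔅 = {A | A convex and cor A = A}`; since `𝔅` is a topological basis
(closed under binary intersection, contains `X` and `∅`), this is the topology
generated by `𝔅`. -/
def tauc (X : Type*) [AddCommGroup X] [Module ℝ X] : TopologicalSpace X :=
  TopologicalSpace.generateFrom {A : Set X | Convex ℝ A ∧ cor A = A}

section Aux
variable {X : Type*} [AddCommGroup X] [Module ℝ X]

lemma tauc_basis :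
    letI := tauc X
    TopologicalSpace.IsTopologicalBasis {A : Set X | Convex ℝ A ∧ cor A = A} := by
  letI := tauc X
  refine ⟨?_, ?_, rfl⟩
  · rintro t₁ ⟨h₁c, h₁⟩ t₂ ⟨h₂c, h₂⟩ x hx
    refine ⟨t₁ ∩ t₂, ⟨h₁c.inter h₂c, ?_⟩, hx, le_refl _⟩
    ext y
    constructor
    · exact fun h => h.1
    · intro hy
      refine ⟨hy, fun d => ?_⟩
      have hy1 : y ∈ cor t₁ := by rw [h₁]; exact hy.1
      have hy2 : y ∈ cor t₂ := by rw [h₂]; exact hy.2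
      obtain ⟨δ₁, hδ₁, H₁⟩ := hy1.2 d
      obtain ⟨δ₂, hδ₂, H₂⟩ := hy2.2 d
      refine ⟨min δ₁ δ₂, lt_min hδ₁ hδ₂, fun lam hlam => ?_⟩
      exact ⟨H₁ lam ⟨hlam.1, hlam.2.trans (min_le_left _ _)⟩,
        H₂ lam ⟨hlam.1, hlam.2.trans (min_le_right _ _)⟩⟩
  · rw [Set.sUnion_eq_univ_iff]
    intro x
    refine ⟨Set.univ, ⟨convex_univ, ?_⟩, trivial⟩
    ext y
    exact ⟨fun h => trivial, fun _ => ⟨trivial, fun d => ⟨1, one_pos, fun _ _ => trivial⟩⟩⟩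

lemma halfspace_basic (f : X →ₗ[ℝ] ℝ) (c : ℝ) :
    Convex ℝ {x : X | c < f x} ∧ cor {x : X | c < f x} = {x : X | c < f x} := by
  constructor
  · exact convex_halfSpace_gt ⟨f.map_add, f.map_smul⟩ c
  · ext x
    constructor
    · exact fun h => h.1
    · intro hx
      simp only [Set.mem_setOf_eq] at hx
      refine ⟨hx, fun d => ?_⟩
      refine ⟨(f x - c) / (|f d| + 1), div_pos (sub_pos.mpr hx) (by positivity), fun lam hlam => ?_⟩
      simp only [Set.mem_setOf_eq, map_add, map_smul, smul_eq_mul] at *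
      have h1 : lam * |f d| ≤ (f x - c) / (|f d| + 1) * |f d| :=
        mul_le_mul_of_nonneg_right hlam.2 (abs_nonneg _)
      have h2 : (f x - c) / (|f d| + 1) * (|f d| + 1) = f x - c := by
        field_simp
      have h3 : -(lam * |f d|) ≤ lam * f d := by
        have := neg_abs_le (f d)
        nlinarith [hlam.1]
      nlinarith [abs_nonneg (f d), div_nonneg (le_of_lt (sub_pos.mpr hx)) (by positivity : (0:ℝ) ≤ |f d| + 1)]

end Aux

section Seg
variable {X : Type*} [AddCommGroup X] [Module ℝ X]

lemma seg_mem {A : Set X} (hA : Convex ℝ A) {a b : X} (ha : a ∈ icr A) (hb : b ∈ vcl A)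
    {t : ℝ} (ht0 : 0 < t) (ht1 : t ≤ 1) : b + t • (a - b) ∈ A := by
  obtain ⟨d, hd⟩ := hb
  by_cases hbA : b ∈ A
  · have := hA hbA ha.1 (by linarith : (0:ℝ) ≤ 1 - t) ht0.le (by ring)
    convert this using 1
    module
  · -- d ∈ span (A - A)
    obtain ⟨μ₁, hμ₁, hμ₁A⟩ := hd 1 one_pos
    have hμ₁0 : 0 < μ₁ := by
      rcases eq_or_lt_of_le hμ₁.1 with h | h
      · exact absurd (by simpa [← h] using hμ₁A) hbA
      · exact h
    obtain ⟨μ₂, hμ₂, hμ₂A⟩ := hd (μ₁ / 2) (by linarith)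
    have hμ₂0 : 0 < μ₂ := by
      rcases eq_or_lt_of_le hμ₂.1 with h | h
      · exact absurd (by simpa [← h] using hμ₂A) hbA
      · exact h
    have hne : μ₁ - μ₂ ≠ 0 := by
      have := hμ₂.2; intro h; rw [sub_eq_zero] at h; linarith
    have hdspan : d ∈ Submodule.span ℝ (A - A) := by
      have hmem : (μ₁ - μ₂) • d ∈ (A : Set X) - A := by
        have : (b + μ₁ • d) - (b + μ₂ • d) = (μ₁ - μ₂) • d := by module
        exact this ▸ Set.sub_mem_sub hμ₁A hμ₂A
      have := Submodule.subset_span (R := ℝ) hmem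
      have h2 := Submodule.smul_mem _ (μ₁ - μ₂)⁻¹ this
      rwa [smul_smul, inv_mul_cancel₀ hne, one_smul] at h2
    obtain ⟨δ₀, hδ₀, hAδ⟩ := ha.2 (-d) (Submodule.neg_mem _ hdspan)
    obtain ⟨μ, hμ, hμA⟩ := hd (t * δ₀) (by positivity)
    set ν : ℝ := (1 - t) * μ / t with hν
    have hν0 : 0 ≤ ν := by
      apply div_nonneg _ ht0.le
      have := hμ.1; nlinarith
    have hνδ : ν ≤ δ₀ := by
      rw [hν, div_le_iff₀ ht0]
      have h1 : μ ≤ t * δ₀ := hμ.2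
      have := hμ.1
      nlinarith
    have haν : a + ν • (-d) ∈ A := hAδ ν ⟨hν0, hνδ⟩
    have := hA hμA haν (by linarith : (0:ℝ) ≤ 1 - t) ht0.le (by ring)
    convert this using 1
    have htν : t • (ν • (-d)) = -(((1 - t) * μ) • d) := by
      rw [smul_smul, hν]
      have : t * ((1 - t) * μ / t) = (1 - t) * μ := by field_simp
      rw [this]; module
    rw [smul_add, smul_add, htν]
    module

end Seg

section Sep
variable {X : Type*} [AddCommGroup X] [Module ℝ X]

set_option maxHeartbeats 1000000 in
lemma sep_lemma {A : Set X} (hA : Convex ℝ A) {a : X} (ha : a ∈ icr A) {b : X} {s : ℝ}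
    (hs0 : 0 < s) (hs1 : s < 1) (hbs : a + s • (b - a) ∉ A) :
    ∃ f : X →ₗ[ℝ] ℝ, ∃ α : ℝ, (∀ x ∈ A, f x ≤ α) ∧ α < f b := by
  classical
  set M : Submodule ℝ X := Submodule.span ℝ (A - A) with hM
  have hAM : ∀ x ∈ A, x - a ∈ M := fun x hx =>
    Submodule.subset_span (Set.sub_mem_sub hx ha.1)
  by_cases hbM : b - a ∈ M
  · -- Hahn-Banach case
    obtain ⟨W, hW⟩ := M.exists_isCompl
    set π : X →ₗ[ℝ] X := M.subtype.comp (M.projectionOnto W hW) with hπ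
    have hπM : ∀ x : X, π x ∈ M := fun x => (M.projectionOnto W hW x).2
    have hπid : ∀ x ∈ M, π x = x := fun x hx => by
      simp [hπ, Submodule.projectionOnto_apply_left hW ⟨x, hx⟩]
    set S : X → Set ℝ := fun x => {t : ℝ | 0 < t ∧ a + t⁻¹ • π x ∈ A} with hS
    set N : X → ℝ := fun x => sInf (S x) with hN
    have h_ne : ∀ x, (S x).Nonempty := by
      intro x
      obtain ⟨δ, hδ, hAδ⟩ := ha.2 (π x) (hπM x)
      refine ⟨δ⁻¹ + 1, by positivity, ?_⟩
      have h1 : (δ⁻¹ + 1)⁻¹ ≤ δ := by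
        have := inv_anti₀ (by positivity : (0:ℝ) < δ⁻¹) (le_add_of_nonneg_right one_pos.le)
        rwa [inv_inv] at this
      exact hAδ _ ⟨by positivity, h1⟩
    have h_bdd : ∀ x, BddBelow (S x) := fun x => ⟨0, fun t ht => ht.1.le⟩
    have h_nonneg : ∀ x, 0 ≤ N x := fun x => le_csInf (h_ne x) fun t ht => ht.1.le
    have h_mem_le : ∀ x, ∀ t ∈ S x, N x ≤ t := fun x t ht => csInf_le (h_bdd x) ht
    -- subadditivity
    have h_core : ∀ x y, ∀ t ∈ S x, ∀ u ∈ S y, N (x + y) ≤ t + u := by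
      rintro x y t ⟨ht0, htA⟩ u ⟨hu0, huA⟩
      apply h_mem_le
      refine ⟨by positivity, ?_⟩
      have hc := hA htA huA (by positivity : (0:ℝ) ≤ t / (t + u))
        (by positivity : (0:ℝ) ≤ u / (t + u)) (by field_simp)
      convert hc using 1
      rw [map_add]
      match_scalars <;> field_simp <;> ring
    have h_add : ∀ x y, N (x + y) ≤ N x + N y := by
      intro x y
      have step1 : ∀ u ∈ S y, N (x + y) - u ≤ N x := fun u hu =>
        le_csInf (h_ne x) fun t ht => by linarith [h_core x y t ht u hu]
      have step2 : N (x + y) - N x ≤ N y :=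
        le_csInf (h_ne y) fun u hu => by linarith [step1 u hu]
      linarith
    -- positive homogeneity
    have h_le_smul : ∀ c : ℝ, 0 < c → ∀ x, N (c • x) ≤ c * N x := by
      intro c hc x
      have h1 : ∀ t ∈ S x, N (c • x) ≤ c * t := by
        rintro t ⟨ht0, htA⟩
        apply h_mem_le
        refine ⟨by positivity, ?_⟩
        rw [map_smul, smul_smul]
        have hct : (c * t)⁻¹ * c = t⁻¹ := by field_simp
        rw [hct]
        exact htA
      have h2 : N (c • x) / c ≤ N x :=
        le_csInf (h_ne x) fun t ht => by
          rw [div_le_iff₀ hc]; linarith [h1 t ht, mul_comm c t]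
      rw [div_le_iff₀ hc] at h2
      linarith [mul_comm (N x) c]
    have h_smul : ∀ c : ℝ, 0 < c → ∀ x, N (c • x) = c * N x := by
      intro c hc x
      refine le_antisymm (h_le_smul c hc x) ?_
      have := h_le_smul c⁻¹ (by positivity) (c • x)
      rw [smul_smul, inv_mul_cancel₀ (ne_of_gt hc), one_smul] at this
      rw [← mul_le_mul_iff_right₀ (inv_pos.mpr hc), ← mul_assoc, inv_mul_cancel₀ (ne_of_gt hc), one_mul]
      linarith [mul_comm c⁻¹ (N (c • x))]
    -- N on A
    have h_A : ∀ x ∈ A, N (x - a) ≤ 1 := by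
      intro x hx
      apply h_mem_le
      refine ⟨one_pos, ?_⟩
      rw [hπid _ (hAM x hx), inv_one, one_smul, add_sub_cancel]
      exact hx
    -- N at b - a
    have h_b : 1 / s ≤ N (b - a) := by
      apply le_csInf (h_ne _)
      rintro t ⟨ht0, htA⟩
      rw [hπid _ hbM] at htA
      by_contra hlt
      push_neg at hlt
      have hst : s * t < 1 := by
        rw [mul_comm]
        exact (lt_div_iff₀ hs0).1 hlt
      have hc := hA ha.1 htA (by linarith : (0:ℝ) ≤ 1 - s * t) (by positivity : (0:ℝ) ≤ s * t)
        (by ring)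
      apply hbs
      convert hc using 1
      match_scalars <;> field_simp <;> ring
    -- Riesz extension
    have hbne : b - a ≠ 0 := by
      intro h
      rw [h, smul_zero, add_zero] at hbs
      exact hbs ha.1
    have hdom : ∀ x : (LinearPMap.mkSpanSingleton (K := ℝ) (σ := RingHom.id ℝ) (b - a) (N (b - a)) hbne).domain,
        (LinearPMap.mkSpanSingleton (K := ℝ) (σ := RingHom.id ℝ) (b - a) (N (b - a)) hbne) x ≤ N x := by
      intro x
      obtain ⟨cc, hcc⟩ := Submodule.mem_span_singleton.1 x.2
      have hx : x = ⟨cc • (b - a), by rw [hcc]; exact x.2⟩ := by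
        ext; exact hcc.symm
      rw [hx, LinearPMap.mkSpanSingleton'_apply]
      show cc • N (b - a) ≤ N (cc • (b - a))
      rcases lt_trichotomy cc 0 with h | h | h
      · have h1 : 0 ≤ N (cc • (b - a)) := h_nonneg _
        have h2 : 0 < N (b - a) := lt_of_lt_of_le (by positivity) h_b
        have h3 : cc • N (b - a) < 0 := by
          simpa [smul_eq_mul] using mul_neg_of_neg_of_pos h h2
        linarith
      · rw [h, zero_smul, zero_smul]
        exact h_nonneg 0
      · rw [smul_eq_mul, ← h_smul cc h]
    obtain ⟨g, hg1, hg2⟩ := exists_extension_of_le_sublinear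
      (LinearPMap.mkSpanSingleton (K := ℝ) (σ := RingHom.id ℝ) (b - a) (N (b - a)) hbne) N
      (fun c hc x => h_smul c hc x) h_add hdom
    have h1s : 1 < 1 / s := by rw [lt_div_iff₀ hs0]; linarith
    refine ⟨g, g a + (1 + 1 / s) / 2, fun x hx => ?_, ?_⟩
    · have h1 : g (x - a) ≤ 1 := le_trans (hg2 (x - a)) (h_A x hx)
      rw [map_sub] at h1
      linarith
    · have hgb : g (b - a) = N (b - a) := by
        have h := hg1 ⟨b - a, Submodule.mem_span_singleton_self _⟩
        rw [LinearPMap.mkSpanSingleton_apply] at h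
        exact h
      rw [map_sub] at hgb
      have h2 := h_b
      linarith
  · -- b - a outside span: use a functional vanishing on M
    have hq : Submodule.Quotient.mk (p := M) (b - a) ≠ 0 := by
      intro h
      exact hbM ((Submodule.Quotient.mk_eq_zero M).1 h)
    obtain ⟨φ, hφ⟩ : ∃ φ : Module.Dual ℝ (X ⧸ M), φ (Submodule.Quotient.mk (b - a)) ≠ 0 := by
      by_contra h
      push_neg at h
      exact hq ((Module.forall_dual_apply_eq_zero_iff ℝ _).1 h)
    set c : ℝ := φ (Submodule.Quotient.mk (b - a)) with hc
    set f : X →ₗ[ℝ] ℝ := c⁻¹ • (φ.comp M.mkQ) with hf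
    have hfM : ∀ x ∈ M, f x = 0 := by
      intro x hx
      simp [hf, (Submodule.Quotient.mk_eq_zero M).2 hx, Submodule.mkQ_apply]
    have hfb : f (b - a) = 1 := by
      have h1 : f (b - a) = c⁻¹ * c := rfl
      rw [h1, inv_mul_cancel₀ hφ]
    refine ⟨f, f a + 1 / 2, fun x hx => ?_, ?_⟩
    · have : f (x - a) = 0 := hfM _ (hAM x hx)
      rw [map_sub] at this
      linarith
    · have : f (b - a) = 1 := hfb
      rw [map_sub] at this
      linarith

end Sep


/-- For a convex, relatively solid set `A` in `X`, the vectorial closure of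
`A` equals the closure of `A` with respect to the core convex topology. -/
theorem stmt12 {X : Type*} [AddCommGroup X] [Module ℝ X] {A : Set X}
    (hA : Convex ℝ A) (hsolid : (icr A).Nonempty) :
    vcl A = @closure X (tauc X) A := by
  letI : TopologicalSpace X := tauc X
  obtain ⟨a, ha⟩ := hsolid
  ext b
  rw [tauc_basis.mem_closure_iff]
  constructor
  · rintro ⟨d, hd⟩ U hU hbU
    have hbcor : b ∈ cor U := by rw [hU.2]; exact hbU
    obtain ⟨δ, hδ, hball⟩ := hbcor.2 d
    obtain ⟨lam, hlam, hlamA⟩ := hd δ hδ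
    exact ⟨b + lam • d, hball lam hlam, hlamA⟩
  · intro hb
    by_contra hnb
    have hnd : ¬(∀ δ : ℝ, 0 < δ → ∃ lam ∈ Set.Icc (0 : ℝ) δ, b + lam • (a - b) ∈ A) :=
      fun h => hnb ⟨a - b, h⟩
    push_neg at hnd
    obtain ⟨δ, hδ, hmiss⟩ := hnd
    set t : ℝ := min δ (1 / 2) with htdef
    have ht0 : 0 < t := lt_min hδ (by norm_num)
    have ht1 : t < 1 := lt_of_le_of_lt (min_le_right _ _) (by norm_num)
    have hbs : a + (1 - t) • (b - a) ∉ A := by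
      have h1 : b + t • (a - b) = a + (1 - t) • (b - a) := by module
      rw [← h1]
      exact hmiss t ⟨ht0.le, min_le_left _ _⟩
    obtain ⟨f, α, hfA, hfb⟩ := sep_lemma hA ha (by linarith : (0:ℝ) < 1 - t)
      (by linarith : (1:ℝ) - t < 1) hbs
    obtain ⟨x, hxU, hxA⟩ := hb {x | α < f x} (halfspace_basic f α) hfb
    exact absurd (hfA x hxA) (not_le.mpr hxU)
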